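/- Let n ≥ 2 and let Γ be a finite index subgroup of SL_n(ℤ). Let F : ℝⁿ → ℝⁿ be a bijection such that F and F⁻¹ are C¹, and such that F(x+m) − F(x) ∈ ℤⁿ for all x ∈ ℝⁿ and m ∈ ℤⁿ. Suppose the induced map of the torus ℝⁿ/ℤⁿ maps Γ-orbits onto Γ-orbits, i.e., for all x, y ∈ ℝⁿ one has (∃ γ ∈ Γ, ∃ m ∈ ℤⁿ, y = γx + m) if and only if (∃ γ ∈ Γ, ∃ m ∈ ℤⁿ, F(y) = γF(x) + m). Then F is affine: there exist A ∈ GL_n(ℤ) with AΓA⁻¹ = Γ and c ∈ ℝⁿ such that F(x) = Ax + c for all x ∈ ℝⁿ. -/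

import Mathlib

/-- The linear action of an integer matrix on `ℝⁿ`. -/
def intMatAct {n : ℕ} (γ : Matrix (Fin n) (Fin n) ℤ) (x : Fin n → ℝ) : Fin n → ℝ :=
  (γ.map (Int.cast : ℤ → ℝ)).mulVec x

namespace Stmt5Aux

open Matrix Topology

/-- cast of an integer vector to a real vector -/
def cV {n : ℕ} (m : Fin n → ℤ) : Fin n → ℝ := fun i => (m i : ℝ)

noncomputable def clmOf {n : ℕ} (M : Matrix (Fin n) (Fin n) ℝ) : (Fin n → ℝ) →L[ℝ] (Fin n → ℝ) :=
  LinearMap.toContinuousLinearMap M.mulVecLin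

lemma mapc_one {n : ℕ} : ((1 : Matrix (Fin n) (Fin n) ℤ).map (Int.cast : ℤ → ℝ)) = 1 := by
  ext a b
  simp [Matrix.map_apply, Matrix.one_apply, apply_ite (Int.cast : ℤ → ℝ)]

lemma mapc_inj {n : ℕ} {M N : Matrix (Fin n) (Fin n) ℤ}
    (h : M.map (Int.cast : ℤ → ℝ) = N.map (Int.cast : ℤ → ℝ)) : M = N := by
  ext a b
  have := congrFun (congrFun h a) b
  simpa [Matrix.map_apply] using Int.cast_injective this

lemma cV_single {n : ℕ} (b : Fin n) : cV (Pi.single b 1) = Pi.single b 1 := by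
  funext i
  rcases eq_or_ne i b with rfl | hib
  · simp [cV]
  · simp [cV, Pi.single_eq_of_ne hib]

/-- cast of integer vector -/

lemma cV_inj {n : ℕ} : Function.Injective (cV (n := n)) := by
  intro a b h
  funext i
  exact Int.cast_injective (congrFun h i)

lemma cV_add {n : ℕ} (a b : Fin n → ℤ) : cV (a + b) = cV a + cV b := by
  funext i; simp [cV]

lemma cV_mulVec {n : ℕ} (M : Matrix (Fin n) (Fin n) ℤ) (m : Fin n → ℤ) :
    cV (M *ᵥ m) = (M.map (Int.cast : ℤ → ℝ)) *ᵥ cV m := by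
  funext i
  simp [cV, Matrix.mulVec, dotProduct, Matrix.map_apply]

/-- A continuous integer-valued function on a preconnected space is constant. -/
lemma int_valued_const {X : Type*} [TopologicalSpace X] [PreconnectedSpace X]
    {f : X → ℝ} (hf : Continuous f) (h : ∀ x, ∃ k : ℤ, f x = k) (x y : X) : f x = f y := by
  have hclopen : IsClopen {z | f z = f x} := by
    constructor
    · exact isClosed_eq hf continuous_const
    · rw [isOpen_iff_mem_nhds]
      intro z hz
      have : ∀ᶠ w in 𝓝 z, |f w - f z| < 1 := by
        have : Continuous fun w => |f w - f z| := (hf.sub continuous_const).abs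
        have h2 : (fun w => |f w - f z|) z < 1 := by simp
        exact (this.tendsto z).eventually_lt_const h2
      filter_upwards [this] with w hw
      obtain ⟨kw, hkw⟩ := h w
      obtain ⟨kz, hkz⟩ := h z
      have : |(kw : ℝ) - kz| < 1 := by rw [← hkw, ← hkz]; exact hw
      have : |kw - kz| < 1 := by
        have := this
        rw [← Int.cast_sub, ← Int.cast_abs] at this
        exact_mod_cast this
      have : kw = kz := by have h3 := Int.abs_lt_one_iff.mp this; omega
      simp only [Set.mem_setOf_eq] at hz ⊢
      rw [hkw, this, ← hkz, hz]
  have := (isClopen_iff.mp hclopen).resolve_left (Set.nonempty_iff_ne_empty.mp ⟨x, rfl⟩)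
  exact (this ▸ (Set.mem_univ y) : y ∈ {z | f z = f x}).symm

lemma toMatrix'_mulVec {n : ℕ} (f : (Fin n → ℤ) →ₗ[ℤ] (Fin n → ℤ)) (v : Fin n → ℤ) :
    (LinearMap.toMatrix' f) *ᵥ v = f v := by
  conv_rhs => rw [← Matrix.toLin'_toMatrix' f]
  rw [Matrix.toLin'_apply]

lemma exists_psi {n : ℕ} (F : (Fin n → ℝ) ≃ (Fin n → ℝ)) (hFc : Continuous F)
    (hper : ∀ (x : Fin n → ℝ) (m : Fin n → ℤ), ∃ k, F (x + cV m) = F x + cV k) :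
    ∃ ψ : (Fin n → ℤ) → (Fin n → ℤ), (∀ x m, F (x + cV m) = F x + cV (ψ m))
      ∧ ∀ a b, ψ (a + b) = ψ a + ψ b := by
  have key : ∀ (m : Fin n → ℤ) (x : Fin n → ℝ), F (x + cV m) - F x = F (0 + cV m) - F 0 := by
    intro m x
    funext i
    have h1 : Continuous fun x : Fin n → ℝ => F (x + cV m) :=
      hFc.comp (continuous_id.add continuous_const)
    have hc : Continuous fun x : Fin n → ℝ => (F (x + cV m) - F x) i :=
      (continuous_apply i).comp (h1.sub hFc)
    exact int_valued_const hc (fun x => by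
      obtain ⟨k, hk⟩ := hper x m
      exact ⟨k i, by simp [hk, cV]⟩) x 0
  choose ψ hψ0 using fun m => hper 0 m
  have hψ : ∀ (x : Fin n → ℝ) (m : Fin n → ℤ), F (x + cV m) = F x + cV (ψ m) := by
    intro x m
    have := key m x
    rw [hψ0 m] at this
    have h2 : F (x + cV m) - F x = cV (ψ m) := by rw [this]; abel
    rw [sub_eq_iff_eq_add] at h2
    rw [h2]; abel
  have hadd : ∀ a b, ψ (a + b) = ψ a + ψ b := by
    intro a b
    apply cV_inj
    have h1 : F (0 + cV (a + b)) = F 0 + cV (ψ (a + b)) := hψ 0 _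
    have h2 : F ((0 + cV a) + cV b) = F 0 + cV (ψ a) + cV (ψ b) := by
      rw [hψ (0 + cV a) b, hψ 0 a]
    rw [cV_add] at h1
    rw [show (0 : Fin n → ℝ) + (cV a + cV b) = (0 + cV a) + cV b by abel] at h1
    rw [h1] at h2
    rw [cV_add]
    have h3 : cV (ψ (a + b)) = cV (ψ a) + cV (ψ b) := by
      have := h2
      rw [add_assoc] at this
      exact (add_left_cancel this).symm ▸ rfl
    rw [h3]
  exact ⟨ψ, hψ, hadd⟩

lemma clmOf_apply {n : ℕ} (M : Matrix (Fin n) (Fin n) ℝ) (x : Fin n → ℝ) :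
    clmOf M x = M *ᵥ x := rfl

lemma engine {n : ℕ} (Γ : Subgroup (Matrix.SpecialLinearGroup (Fin n) ℤ))
    (F : (Fin n → ℝ) ≃ (Fin n → ℝ))
    (hF : ContDiff ℝ 1 F) (hFsymm : ContDiff ℝ 1 F.symm)
    (horb : ∀ x y : Fin n → ℝ,
      (∃ γ ∈ Γ, ∃ m : Fin n → ℤ,
          y = intMatAct (γ : Matrix (Fin n) (Fin n) ℤ) x + fun i => (m i : ℝ)) ↔
      (∃ γ ∈ Γ, ∃ m : Fin n → ℤ,
          F y = intMatAct (γ : Matrix (Fin n) (Fin n) ℤ) (F x) + fun i => (m i : ℝ)))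
    (γ : Matrix.SpecialLinearGroup (Fin n) ℤ) (hγ : γ ∈ Γ) :
    ∃ β ∈ Γ, ∃ c : Fin n → ℝ, ∀ x : Fin n → ℝ,
      F (intMatAct (γ : Matrix (Fin n) (Fin n) ℤ) x)
        = intMatAct (β : Matrix (Fin n) (Fin n) ℤ) (F x) + c := by
  classical
  set h : (Fin n → ℝ) → (Fin n → ℝ) :=
    fun y => F (intMatAct (γ : Matrix (Fin n) (Fin n) ℤ) (F.symm y)) with hh_def
  have hact : ∀ x, intMatAct ((γ : Matrix (Fin n) (Fin n) ℤ)) x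
      = clmOf ((γ : Matrix (Fin n) (Fin n) ℤ).map (Int.cast : ℤ → ℝ)) x := fun _ => rfl
  have hh : ContDiff ℝ 1 h := by
    apply hF.comp
    exact ((clmOf ((γ : Matrix (Fin n) (Fin n) ℤ).map (Int.cast : ℤ → ℝ))).contDiff).comp hFsymm
  -- countable cover
  have cover : ∀ y, ∃ p : Γ × (Fin n → ℤ),
      h y = intMatAct ((p.1 : Matrix.SpecialLinearGroup (Fin n) ℤ) : Matrix (Fin n) (Fin n) ℤ) y + cV p.2 := by
    intro y
    have := (horb (F.symm y) (intMatAct (γ : Matrix (Fin n) (Fin n) ℤ) (F.symm y))).mp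
      ⟨γ, hγ, 0, by funext i; simp⟩
    obtain ⟨β, hβ, m, hm⟩ := this
    exact ⟨⟨⟨β, hβ⟩, m⟩, by rw [Equiv.apply_symm_apply] at hm; exact hm⟩
  set S : Γ × (Fin n → ℤ) → Set (Fin n → ℝ) :=
    fun p => {y | h y = intMatAct ((p.1 : Matrix.SpecialLinearGroup (Fin n) ℤ) : Matrix (Fin n) (Fin n) ℤ) y + cV p.2} with hS_def
  have hSclosed : ∀ p, IsClosed (S p) := by
    intro p
    exact isClosed_eq hh.continuous
      ((Continuous.add ((clmOf (((p.1 : Matrix.SpecialLinearGroup (Fin n) ℤ) : Matrix (Fin n) (Fin n) ℤ).map (Int.cast : ℤ → ℝ))).continuous) continuous_const :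
        Continuous fun y => clmOf _ y + cV p.2))
  have hcover_univ : ⋃ p, S p = Set.univ := by
    ext y
    simp only [Set.mem_iUnion, Set.mem_univ, iff_true]
    exact cover y
  haveI : Countable (Matrix (Fin n) (Fin n) ℤ) := by unfold Matrix; infer_instance
  haveI : Countable (Matrix.SpecialLinearGroup (Fin n) ℤ) := by
    unfold Matrix.SpecialLinearGroup; infer_instance
  have hdense : Dense (⋃ p, interior (S p)) :=
    dense_iUnion_interior_of_closed hSclosed hcover_univ
  obtain ⟨y₀, hy₀⟩ := hdense.nonempty
  obtain ⟨p₀, hp₀⟩ := Set.mem_iUnion.mp hy₀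
  -- fderiv on interiors
  have hfd : ∀ p, ∀ y ∈ interior (S p), fderiv ℝ h y
      = clmOf (((p.1 : Matrix.SpecialLinearGroup (Fin n) ℤ) : Matrix (Fin n) (Fin n) ℤ).map (Int.cast : ℤ → ℝ)) := by
    intro p y hy
    have hev : h =ᶠ[𝓝 y] fun z =>
        clmOf (((p.1 : Matrix.SpecialLinearGroup (Fin n) ℤ) : Matrix (Fin n) (Fin n) ℤ).map (Int.cast : ℤ → ℝ)) z + cV p.2 := by
      have hsub : interior (S p) ⊆ {z | h z =
          clmOf (((p.1 : Matrix.SpecialLinearGroup (Fin n) ℤ) : Matrix (Fin n) (Fin n) ℤ).map (Int.cast : ℤ → ℝ)) z + cV p.2} :=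
        fun z hz => (interior_subset hz : z ∈ S p)
      exact Filter.eventually_of_mem (isOpen_interior.mem_nhds hy) hsub
    rw [hev.fderiv_eq]
    rw [fderiv_add_const]
    exact ContinuousLinearMap.fderiv _
  have hcont_fd : Continuous fun y => fderiv ℝ h y := hh.continuous_fderiv one_ne_zero
  have hdiff : Differentiable ℝ h := hh.differentiable one_ne_zero
  have hent_cont : ∀ (a b : Fin n), Continuous fun y => fderiv ℝ h y (Pi.single b 1) a :=
    fun a b => (continuous_apply a).comp (hcont_fd.clm_apply continuous_const)
  have hent_int : ∀ (a b : Fin n) (y : Fin n → ℝ),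
      fderiv ℝ h y (Pi.single b 1) a ∈ Set.range ((↑) : ℤ → ℝ) := by
    intro a b
    have hsub : (⋃ p, interior (S p)) ⊆
        {y | fderiv ℝ h y (Pi.single b 1) a ∈ Set.range ((↑) : ℤ → ℝ)} := by
      intro y hy
      obtain ⟨p, hp⟩ := Set.mem_iUnion.mp hy
      have := hfd p y hp
      simp only [Set.mem_setOf_eq, this]
      refine ⟨(p.1 : Matrix.SpecialLinearGroup (Fin n) ℤ).1 a b, ?_⟩
      rw [clmOf_apply, Matrix.mulVec_single]
      simp [Matrix.map_apply]
    have hcl : IsClosed {y | fderiv ℝ h y (Pi.single b 1) a ∈ Set.range ((↑) : ℤ → ℝ)} :=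
      IsClosed.preimage (hent_cont a b) Int.isClosedEmbedding_coe_real.isClosed_range
    have hdense2 : Dense {y | fderiv ℝ h y (Pi.single b 1) a ∈ Set.range ((↑) : ℤ → ℝ)} :=
      hdense.mono hsub
    have : {y | fderiv ℝ h y (Pi.single b 1) a ∈ Set.range ((↑) : ℤ → ℝ)} = Set.univ := by
      rw [← hcl.closure_eq]; exact hdense2.closure_eq
    intro y
    have hy : y ∈ {y | fderiv ℝ h y (Pi.single b 1) a ∈ Set.range ((↑) : ℤ → ℝ)} := by
      rw [this]; exact Set.mem_univ y
    exact hy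
  have hent_const : ∀ (a b : Fin n) (y : Fin n → ℝ),
      fderiv ℝ h y (Pi.single b 1) a = fderiv ℝ h y₀ (Pi.single b 1) a := by
    intro a b y
    exact int_valued_const (hent_cont a b)
      (fun z => (hent_int a b z).imp fun k hk => hk.symm) y y₀
  have hfd_const : ∀ y, fderiv ℝ h y = fderiv ℝ h y₀ := by
    intro y
    apply ContinuousLinearMap.coe_injective
    apply Module.Basis.ext (Pi.basisFun ℝ (Fin n))
    intro b
    rw [Pi.basisFun_apply]
    funext a
    exact hent_const a b y
  set T := fderiv ℝ h y₀ with hT_def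
  have haff : ∀ y, h y = T y + h 0 := by
    have hg : Differentiable ℝ fun y => h y - T y := hdiff.sub T.differentiable
    have hg0 : ∀ y, fderiv ℝ (fun y => h y - T y) y = 0 := by
      intro y
      rw [fderiv_fun_sub (hdiff y) (T.differentiable y)]
      rw [T.fderiv, hfd_const y]
      exact sub_self T
    intro y
    have := is_const_of_fderiv_eq_zero hg hg0 y 0
    have h2 : h y - T y = h 0 - T 0 := this
    rw [map_zero] at h2
    rw [sub_zero] at h2
    rw [sub_eq_iff_eq_add] at h2
    rw [h2]; abel
  refine ⟨(p₀.1 : Matrix.SpecialLinearGroup (Fin n) ℤ), p₀.1.2, h 0, ?_⟩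
  intro x
  have hx : h (F x) = T (F x) + h 0 := haff (F x)
  have hTT : T = clmOf (((p₀.1 : Matrix.SpecialLinearGroup (Fin n) ℤ) : Matrix (Fin n) (Fin n) ℤ).map (Int.cast : ℤ → ℝ)) :=
    hfd p₀ y₀ hp₀
  have hhx : h (F x) = F (intMatAct (γ : Matrix (Fin n) (Fin n) ℤ) x) := by
    simp only [hh_def, Equiv.symm_apply_apply]
  rw [← hhx, hx, hTT]
  rfl

lemma matrix_ext_of_mulVec {n : ℕ} {M N : Matrix (Fin n) (Fin n) ℤ}
    (h : ∀ m : Fin n → ℤ, M *ᵥ m = N *ᵥ m) : M = N := by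
  ext a b
  have := congrFun (h (Pi.single b 1)) a
  simpa [Matrix.mulVec_single] using this

lemma step4 {n : ℕ} (F : (Fin n → ℝ) ≃ (Fin n → ℝ))
    (B : Matrix (Fin n) (Fin n) ℤ)
    (hB : ∀ x m, F (x + cV m) = F x + cV (B *ᵥ m))
    (γ β : Matrix (Fin n) (Fin n) ℤ) (c : Fin n → ℝ)
    (hrel : ∀ x, F (intMatAct γ x) = intMatAct β (F x) + c) :
    B * γ = β * B := by
  apply matrix_ext_of_mulVec
  intro m
  apply cV_inj
  have h1 : intMatAct γ ((0 : Fin n → ℝ) + cV m) = intMatAct γ 0 + cV (γ *ᵥ m) := by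
    unfold intMatAct
    rw [Matrix.mulVec_add, cV_mulVec]
  have h2 : F (intMatAct γ ((0 : Fin n → ℝ) + cV m))
      = intMatAct β (F 0) + c + cV ((B * γ) *ᵥ m) := by
    rw [h1, hB, hrel, ← Matrix.mulVec_mulVec]
  have h3 : F (intMatAct γ ((0 : Fin n → ℝ) + cV m))
      = intMatAct β (F 0) + c + cV ((β * B) *ᵥ m) := by
    rw [hrel, hB, show intMatAct β (F 0 + cV (B *ᵥ m))
      = intMatAct β (F 0) + intMatAct β (cV (B *ᵥ m)) from Matrix.mulVec_add _ _ _]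
    rw [show intMatAct β (cV (B *ᵥ m)) = cV (β *ᵥ (B *ᵥ m)) from (cV_mulVec _ _).symm]
    rw [Matrix.mulVec_mulVec]
    abel
  have := h2.symm.trans h3
  exact add_left_cancel this

lemma periodic_bounded {n : ℕ} (G : (Fin n → ℝ) → (Fin n → ℝ)) (hc : Continuous G)
    (hper : ∀ x (m : Fin n → ℤ), G (x + cV m) = G x) : ∃ C, ∀ x, ‖G x‖ ≤ C := by
  obtain ⟨C, hC⟩ := (isCompact_Icc (a := (0 : Fin n → ℝ)) (b := 1)).exists_bound_of_continuousOn
    hc.continuousOn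
  refine ⟨C, fun x => ?_⟩
  have hx : x = (fun i => Int.fract (x i)) + cV (fun i => ⌊x i⌋) := by
    funext i
    simp only [Pi.add_apply, cV, Int.fract]
    ring
  have hmem : (fun i => Int.fract (x i)) ∈ Set.Icc (0 : Fin n → ℝ) 1 := by
    constructor
    · intro i; exact Int.fract_nonneg _
    · intro i; exact (Int.fract_lt_one _).le
  have hGx : G x = G (fun i => Int.fract (x i)) := by
    conv_lhs => rw [hx]
    exact hper _ _
  rw [hGx]
  exact hC _ hmem

lemma dot_abs_le {n : ℕ} (w v : Fin n → ℝ) : |w ⬝ᵥ v| ≤ (∑ i, |w i|) * ‖v‖ := by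
  calc |∑ i, w i * v i| ≤ ∑ i, |w i * v i| := Finset.abs_sum_le_sum_abs _ _
  _ = ∑ i, |w i| * |v i| := by simp [abs_mul]
  _ ≤ ∑ i, |w i| * ‖v‖ := by
      refine Finset.sum_le_sum (fun i _ => mul_le_mul_of_nonneg_left ?_ (abs_nonneg _))
      simpa [Real.norm_eq_abs] using norm_le_pi_norm v i
  _ = (∑ i, |w i|) * ‖v‖ := (Finset.sum_mul _ _ _).symm

lemma det_ne_zero_of_bounded {n : ℕ} (F : (Fin n → ℝ) ≃ (Fin n → ℝ))
    (M : Matrix (Fin n) (Fin n) ℝ) (C : ℝ)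
    (hbound : ∀ x, ‖F x - M *ᵥ x‖ ≤ C) : M.det ≠ 0 := by
  intro h0
  obtain ⟨w, hw0, hw⟩ := (Matrix.exists_vecMul_eq_zero_iff).mpr h0
  obtain ⟨i₀, hi₀⟩ := Function.ne_iff.mp hw0
  have hww : 0 < w ⬝ᵥ w := by
    refine Finset.sum_pos' (fun i _ => mul_self_nonneg _) ⟨i₀, Finset.mem_univ _, ?_⟩
    exact mul_self_pos.mpr (by simpa using hi₀)
  set K := (∑ i, |w i|) * C + 1 with hK
  set y := (K / (w ⬝ᵥ w)) • w with hy
  have key : |w ⬝ᵥ y| ≤ (∑ i, |w i|) * C := by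
    set x := F.symm y with hxd
    have h1 : w ⬝ᵥ y = w ⬝ᵥ (F x - M *ᵥ x) := by
      have h2 : w ⬝ᵥ (M *ᵥ x) = 0 := by
        rw [Matrix.dotProduct_mulVec, hw, zero_dotProduct]
      have h3 : F x = y := F.apply_symm_apply y
      rw [dotProduct_sub, h3, h2, sub_zero]
    rw [h1]
    calc |w ⬝ᵥ (F x - M *ᵥ x)| ≤ (∑ i, |w i|) * ‖F x - M *ᵥ x‖ := dot_abs_le _ _
    _ ≤ (∑ i, |w i|) * C := by
        refine mul_le_mul_of_nonneg_left (hbound x) ?_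
        positivity
  have hcomp : w ⬝ᵥ y = K := by
    rw [hy, dotProduct_smul, smul_eq_mul]
    field_simp
  rw [hcomp] at key
  have hCpos : 0 ≤ (∑ i, |w i|) * C := le_trans (abs_nonneg _) key
  have : |K| = K := abs_of_pos (by rw [hK]; linarith)
  rw [this] at key
  rw [hK] at key
  linarith

lemma transvection_in_subgroup {n : ℕ}
    (Γ : Subgroup (Matrix.SpecialLinearGroup (Fin n) ℤ)) (hΓ : Γ.FiniteIndex)
    (i j : Fin n) (hij : i ≠ j) :
    ∃ t : ℤ, t ≠ 0 ∧ ∀ k : ℤ, ∃ g : Matrix.SpecialLinearGroup (Fin n) ℤ, g ∈ Γ ∧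
      (g : Matrix (Fin n) (Fin n) ℤ) = 1 + Matrix.single i j (k * t) := by
  classical
  set u : ℤ → Matrix.SpecialLinearGroup (Fin n) ℤ :=
    fun c => ⟨Matrix.transvection i j c, Matrix.det_transvection_of_ne i j hij c⟩ with hu
  have humul : ∀ a b : ℤ, u a * u b = u (a + b) := by
    intro a b
    apply Subtype.ext
    exact Matrix.transvection_mul_transvection_same i j hij a b
  have hu0 : u 0 = 1 := by
    apply Subtype.ext
    show Matrix.transvection i j 0 = 1
    simp [Matrix.transvection]
  have huinv : ∀ a : ℤ, (u a)⁻¹ = u (-a) := by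
    intro a
    apply inv_eq_of_mul_eq_one_right
    rw [humul, add_neg_cancel, hu0]
  have hupow : ∀ (s : ℕ) (a : ℤ), u a ^ s = u (s * a) := by
    intro s a
    induction s with
    | zero => simpa using hu0.symm
    | succ k ih =>
        rw [pow_succ, ih, humul]
        congr 1
        push_cast
        ring
  have huzpow : ∀ (k : ℤ) (a : ℤ), u a ^ k = u (k * a) := by
    intro k a
    rcases k with s | s
    · rw [Int.ofNat_eq_coe, zpow_natCast, hupow]
    · rw [Int.negSucc_eq, _root_.zpow_neg,
        show ((s : ℤ) + 1) = ((s + 1 : ℕ) : ℤ) by push_cast; ring,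
        zpow_natCast, hupow, huinv]
      congr 1
      push_cast
      ring
  haveI := hΓ
  haveI : Γ.normalCore.FiniteIndex := inferInstance
  set N := Γ.normalCore with hN
  have htne : (N.index : ℤ) ≠ 0 := by
    exact_mod_cast Subgroup.FiniteIndex.index_ne_zero (H := N)
  refine ⟨(N.index : ℤ), htne, fun k => ?_⟩
  refine ⟨u (k * N.index), ?_, rfl⟩
  have h1 : u 1 ^ (N.index : ℕ) ∈ N := Subgroup.pow_index_mem N (u 1)
  have h2 : u ((N.index : ℤ)) ∈ Γ := by
    have := Subgroup.normalCore_le Γ h1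
    rwa [hupow, mul_one] at this
  have h3 : u ((N.index : ℤ)) ^ k ∈ Γ := Subgroup.zpow_mem Γ h2 k
  rwa [huzpow] at h3

lemma map_cast_one_add_std {n : ℕ} (i j : Fin n) (c : ℤ) :
    ((1 + Matrix.single i j c : Matrix (Fin n) (Fin n) ℤ).map (Int.cast : ℤ → ℝ))
      = 1 + Matrix.single i j (c : ℝ) := by
  ext a b
  simp only [Matrix.map_apply, Matrix.add_apply, Matrix.one_apply, Matrix.single,
    Matrix.of_apply, apply_ite (Int.cast : ℤ → ℝ)]
  push_cast
  rfl

lemma std_mulVec {n : ℕ} (i j : Fin n) (c : ℝ) (w : Fin n → ℝ) :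
    Matrix.single i j c *ᵥ w = Pi.single i (c * w j) := by
  funext a
  simp [Matrix.mulVec, dotProduct, Matrix.single, Pi.single_apply, ite_and]
  rcases eq_or_ne i a with rfl | hne
  · simp
  · simp [hne, Ne.symm hne]

lemma norm_coord_le {n : ℕ} (v : Fin n → ℝ) (a : Fin n) : |v a| ≤ ‖v‖ := by
  simpa [Real.norm_eq_abs] using norm_le_pi_norm v a

lemma unbounded_kill {va D : ℝ} (hD : 0 < D) (C : ℝ)
    (h : ∀ k : ℤ, |va + (k : ℝ) * D| ≤ C) : False := by
  obtain ⟨k, hk⟩ := exists_nat_gt ((C + |va|) / D)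
  have h1 := h k
  push_cast at h1
  have h5 : C + |va| < (k:ℝ) * D := by
    have := mul_lt_mul_of_pos_right hk hD
    rwa [div_mul_cancel₀ _ hD.ne'] at this
  have ha := (abs_le.mp h1).2
  have hb := neg_le_abs va
  linarith

lemma unbounded_kill' {va D : ℝ} (hD : D ≠ 0) (C : ℝ)
    (h : ∀ k : ℤ, |va + (k : ℝ) * D| ≤ C) : False := by
  rcases hD.lt_or_gt with hneg | hpos
  · refine unbounded_kill (va := va) (D := -D) (by linarith) C (fun k => ?_)
    have := h (-k)
    calc |va + (k:ℝ) * -D| = |va + ((-k : ℤ) : ℝ) * D| := by push_cast; ring_nf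
    _ ≤ C := this
  · exact unbounded_kill hpos C h

lemma mapc_mul {n : ℕ} (M N : Matrix (Fin n) (Fin n) ℤ) :
    (M * N).map (Int.cast : ℤ → ℝ) = M.map (Int.cast : ℤ → ℝ) * N.map (Int.cast : ℤ → ℝ) := by
  ext a b
  simp [Matrix.mul_apply, Matrix.map_apply]

lemma single_eq_smul {n : ℕ} (i : Fin n) (r : ℝ) :
    (Pi.single i r : Fin n → ℝ) = r • (Pi.single i 1 : Fin n → ℝ) := by
  funext b
  rcases eq_or_ne b i with rfl | hb
  · simp
  · simp [Pi.single_eq_of_ne hb]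

lemma affine_of_rel {n : ℕ} (hn : 2 ≤ n)
    (F : (Fin n → ℝ) ≃ (Fin n → ℝ)) (hFc : Continuous F)
    (B : Matrix (Fin n) (Fin n) ℤ)
    (hB : ∀ x m, F (x + cV m) = F x + cV (B *ᵥ m))
    (hdet : (B.map (Int.cast : ℤ → ℝ)).det ≠ 0)
    (hkey : ∀ i j : Fin n, i ≠ j → ∃ t : ℤ, t ≠ 0 ∧ ∀ k : ℤ,
      ∃ (β : Matrix (Fin n) (Fin n) ℤ) (c : Fin n → ℝ),
        B * (1 + Matrix.single i j (k * t)) = β * B ∧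
        ∀ x, F (intMatAct (1 + Matrix.single i j (k * t)) x)
          = intMatAct β (F x) + c) :
    ∀ x y, F x - (B.map (Int.cast : ℤ → ℝ)) *ᵥ x = F y - (B.map (Int.cast : ℤ → ℝ)) *ᵥ y := by
  classical
  set BR := B.map (Int.cast : ℤ → ℝ) with hBR
  have hBu : IsUnit BR.det := isUnit_iff_ne_zero.mpr hdet
  set Binv := BR⁻¹ with hBinv
  have hBB : BR * Binv = 1 := Matrix.mul_nonsing_inv _ hBu
  have hB'B : Binv * BR = 1 := Matrix.nonsing_inv_mul _ hBu
  set G : (Fin n → ℝ) → (Fin n → ℝ) := fun x => F x - BR *ᵥ x with hG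
  have hGc : Continuous G := by
    apply hFc.sub
    exact (clmOf BR).continuous
  have hGper : ∀ x m, G (x + cV m) = G x := by
    intro x m
    simp only [hG]
    rw [hB, Matrix.mulVec_add, ← cV_mulVec]
    abel
  obtain ⟨C, hC⟩ := periodic_bounded G hGc hGper
  intro x y
  show G x = G y
  have hv : ∀ j : Fin n, (Binv *ᵥ (G x - G y)) j = 0 := by
    intro j
    by_contra hwj0
    obtain ⟨v, hvdef⟩ : ∃ v, v = G x - G y := ⟨_, rfl⟩
    obtain ⟨w, hw⟩ : ∃ w, w = Binv *ᵥ v := ⟨_, rfl⟩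
    have hwj : w j ≠ 0 := by rw [hw, hvdef]; exact hwj0
    have hBv : BR *ᵥ w = v := by
      rw [hw, Matrix.mulVec_mulVec, hBB, Matrix.one_mulVec]
    obtain ⟨i, hij⟩ : ∃ i : Fin n, i ≠ j := by
      refine Fintype.exists_ne_of_one_lt_card ?_ j
      simpa using (show 1 < n by omega)
    obtain ⟨t, ht0, hk⟩ := hkey i j hij
    obtain ⟨col, hcol⟩ : ∃ col, col = BR *ᵥ Pi.single i 1 := ⟨_, rfl⟩
    have hcolne : col ≠ 0 := by
      intro h0
      have : Binv *ᵥ col = 0 := by rw [h0, Matrix.mulVec_zero]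
      rw [hcol, Matrix.mulVec_mulVec, hB'B, Matrix.one_mulVec] at this
      have h1 := congrFun this i
      rw [Pi.single_eq_same, Pi.zero_apply] at h1
      exact one_ne_zero h1
    obtain ⟨a, ha⟩ := Function.ne_iff.mp hcolne
    have hDne : (t : ℝ) * w j * col a ≠ 0 := by
      have ht : (t : ℝ) ≠ 0 := Int.cast_ne_zero.mpr ht0
      exact mul_ne_zero (mul_ne_zero ht hwj) ha
    refine unbounded_kill' (va := v a) (D := (t:ℝ) * w j * col a) hDne (2 * C) (fun k => ?_)
    obtain ⟨βk, ck, hcomm, hrelk⟩ := hk k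
    have hGrel : ∀ z, G (intMatAct (1 + Matrix.single i j (k * t)) z)
        = ((βk.map (Int.cast : ℤ → ℝ)) *ᵥ (G z)) + ck := by
      intro z
      simp only [hG]
      rw [hrelk z]
      have hmm : BR *ᵥ (((1 + Matrix.single i j (k * t)).map (Int.cast : ℤ → ℝ)) *ᵥ z)
          = (βk.map (Int.cast : ℤ → ℝ)) *ᵥ (BR *ᵥ z) := by
        rw [Matrix.mulVec_mulVec, Matrix.mulVec_mulVec, hBR, ← mapc_mul, hcomm, mapc_mul]
      show intMatAct βk (F z) + ck - BR *ᵥ (((1 + Matrix.single i j (k * t)).map (Int.cast : ℤ → ℝ)) *ᵥ z) = _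
      rw [hmm]
      unfold intMatAct
      rw [Matrix.mulVec_sub]
      abel
    have hdiff : (βk.map (Int.cast : ℤ → ℝ)) *ᵥ v
        = G (intMatAct (1 + Matrix.single i j (k * t)) x)
          - G (intMatAct (1 + Matrix.single i j (k * t)) y) := by
      rw [hGrel x, hGrel y, hvdef, Matrix.mulVec_sub]
      abel
    have hnorm : ‖(βk.map (Int.cast : ℤ → ℝ)) *ᵥ v‖ ≤ 2 * C := by
      rw [hdiff]
      calc ‖_ - _‖ ≤ ‖G (intMatAct (1 + Matrix.single i j (k * t)) x)‖
          + ‖G (intMatAct (1 + Matrix.single i j (k * t)) y)‖ := norm_sub_le _ _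
      _ ≤ 2 * C := by have := hC (intMatAct (1 + Matrix.single i j (k * t)) x);
                      have := hC (intMatAct (1 + Matrix.single i j (k * t)) y); linarith
    have hexpand : (βk.map (Int.cast : ℤ → ℝ)) *ᵥ v
        = v + (((k * t : ℤ) : ℝ) * w j) • col := by
      have e1 : (βk.map (Int.cast : ℤ → ℝ)) * BR = BR * ((1 + Matrix.single i j (k * t)).map (Int.cast : ℤ → ℝ)) := by
        rw [hBR, ← mapc_mul, ← mapc_mul, hcomm]
      calc (βk.map (Int.cast : ℤ → ℝ)) *ᵥ v
          = (βk.map (Int.cast : ℤ → ℝ)) *ᵥ (BR *ᵥ w) := by rw [hBv]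
      _ = ((βk.map (Int.cast : ℤ → ℝ)) * BR) *ᵥ w := by rw [Matrix.mulVec_mulVec]
      _ = (BR * ((1 + Matrix.single i j (k * t)).map (Int.cast : ℤ → ℝ))) *ᵥ w := by rw [e1]
      _ = BR *ᵥ (((1 + Matrix.single i j (k * t)).map (Int.cast : ℤ → ℝ)) *ᵥ w) := by
            rw [Matrix.mulVec_mulVec]
      _ = BR *ᵥ (w + Pi.single i (((k * t : ℤ) : ℝ) * w j)) := by
            rw [map_cast_one_add_std, Matrix.add_mulVec, Matrix.one_mulVec, std_mulVec]
      _ = v + (((k * t : ℤ) : ℝ) * w j) • col := by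
            rw [Matrix.mulVec_add, hBv, single_eq_smul, Matrix.mulVec_smul, ← hcol]
    have hcoord : |v a + ((k : ℝ)) * ((t:ℝ) * w j * col a)| ≤ 2 * C := by
      have h1 : ((βk.map (Int.cast : ℤ → ℝ)) *ᵥ v) a
          = v a + ((k:ℝ)) * ((t:ℝ) * w j * col a) := by
        rw [hexpand]
        simp only [Pi.add_apply, Pi.smul_apply, smul_eq_mul]
        push_cast
        ring
      calc |v a + ((k : ℝ)) * ((t:ℝ) * w j * col a)|
          = |((βk.map (Int.cast : ℤ → ℝ)) *ᵥ v) a| := by rw [h1]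
      _ ≤ ‖(βk.map (Int.cast : ℤ → ℝ)) *ᵥ v‖ := norm_coord_le _ _
      _ ≤ 2 * C := hnorm
    exact hcoord
  have : BR *ᵥ (Binv *ᵥ (G x - G y)) = 0 := by
    rw [show (Binv *ᵥ (G x - G y)) = 0 from funext hv, Matrix.mulVec_zero]
  rw [Matrix.mulVec_mulVec, hBB, Matrix.one_mulVec] at this
  exact sub_eq_zero.mp this

end Stmt5Aux

open Matrix in
theorem stmt5 (n : ℕ) (hn : 2 ≤ n)
    (Γ : Subgroup (Matrix.SpecialLinearGroup (Fin n) ℤ)) (hΓ : Γ.FiniteIndex)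
    (F : (Fin n → ℝ) ≃ (Fin n → ℝ))
    (hF : ContDiff ℝ 1 F) (hFsymm : ContDiff ℝ 1 F.symm)
    (hper : ∀ (x : Fin n → ℝ) (m : Fin n → ℤ),
      ∃ k : Fin n → ℤ, F (x + fun i => (m i : ℝ)) = F x + fun i => (k i : ℝ))
    (horb : ∀ x y : Fin n → ℝ,
      (∃ γ ∈ Γ, ∃ m : Fin n → ℤ,
          y = intMatAct (γ : Matrix (Fin n) (Fin n) ℤ) x + fun i => (m i : ℝ)) ↔
      (∃ γ ∈ Γ, ∃ m : Fin n → ℤ,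
          F y = intMatAct (γ : Matrix (Fin n) (Fin n) ℤ) (F x) + fun i => (m i : ℝ))) :
    ∃ A : Matrix.GeneralLinearGroup (Fin n) ℤ,
      (∀ g : Matrix (Fin n) (Fin n) ℤ,
        (∃ γ ∈ Γ, (A : Matrix (Fin n) (Fin n) ℤ) * (γ : Matrix (Fin n) (Fin n) ℤ) *
            ((A⁻¹ : Matrix.GeneralLinearGroup (Fin n) ℤ) : Matrix (Fin n) (Fin n) ℤ) = g) ↔
        (∃ γ ∈ Γ, (γ : Matrix (Fin n) (Fin n) ℤ) = g)) ∧
      ∃ c : Fin n → ℝ, ∀ x : Fin n → ℝ,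
        F x = intMatAct (A : Matrix (Fin n) (Fin n) ℤ) x + c := by
  classical
  have hFc : Continuous F := hF.continuous
  obtain ⟨ψ, hψ, hadd⟩ := Stmt5Aux.exists_psi F hFc hper
  set B : Matrix (Fin n) (Fin n) ℤ :=
    LinearMap.toMatrix' (AddMonoidHom.mk' ψ hadd).toIntLinearMap with hBdef
  have hB : ∀ x m, F (x + Stmt5Aux.cV m) = F x + Stmt5Aux.cV (B *ᵥ m) := by
    intro x m
    rw [hBdef, Stmt5Aux.toMatrix'_mulVec]
    exact hψ x m
  set BR := B.map (Int.cast : ℤ → ℝ) with hBR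
  set Gf : (Fin n → ℝ) → (Fin n → ℝ) := fun x => F x - BR *ᵥ x with hGf
  have hGc : Continuous Gf := hFc.sub (Stmt5Aux.clmOf BR).continuous
  have hGper : ∀ x m, Gf (x + Stmt5Aux.cV m) = Gf x := by
    intro x m
    simp only [hGf]
    rw [hB, Matrix.mulVec_add, ← Stmt5Aux.cV_mulVec]
    abel
  obtain ⟨C, hC⟩ := Stmt5Aux.periodic_bounded Gf hGc hGper
  have hdet : BR.det ≠ 0 := Stmt5Aux.det_ne_zero_of_bounded F BR C (fun x => hC x)
  have hconjF : ∀ γ : Matrix.SpecialLinearGroup (Fin n) ℤ, γ ∈ Γ →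
      ∃ β : Matrix.SpecialLinearGroup (Fin n) ℤ, β ∈ Γ ∧ ∃ c : Fin n → ℝ,
        B * (γ : Matrix (Fin n) (Fin n) ℤ) = (β : Matrix (Fin n) (Fin n) ℤ) * B ∧
        ∀ x, F (intMatAct (γ : Matrix (Fin n) (Fin n) ℤ) x)
          = intMatAct (β : Matrix (Fin n) (Fin n) ℤ) (F x) + c := by
    intro γ hγ
    obtain ⟨β, hβ, c, hrel⟩ := Stmt5Aux.engine Γ F hF hFsymm horb γ hγ
    exact ⟨β, hβ, c, Stmt5Aux.step4 F B hB _ _ c hrel, hrel⟩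
  have hkey : ∀ i j : Fin n, i ≠ j → ∃ t : ℤ, t ≠ 0 ∧ ∀ k : ℤ,
      ∃ (β : Matrix (Fin n) (Fin n) ℤ) (c : Fin n → ℝ),
        B * (1 + Matrix.single i j (k * t)) = β * B ∧
        ∀ x, F (intMatAct (1 + Matrix.single i j (k * t)) x)
          = intMatAct β (F x) + c := by
    intro i j hij
    obtain ⟨t, ht0, htr⟩ := Stmt5Aux.transvection_in_subgroup Γ hΓ i j hij
    refine ⟨t, ht0, fun k => ?_⟩
    obtain ⟨g, hg, hgeq⟩ := htr k
    obtain ⟨β, hβ, c, hcomm, hrel⟩ := hconjF g hg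
    rw [hgeq] at hcomm hrel
    exact ⟨(β : Matrix (Fin n) (Fin n) ℤ), c, hcomm, hrel⟩
  have haff := Stmt5Aux.affine_of_rel hn F hFc B hB hdet hkey
  have hFx : ∀ x, F x = BR *ᵥ x + F 0 := by
    intro x
    have h1 := haff x 0
    rw [Matrix.mulVec_zero, sub_zero] at h1
    rw [← hBR] at h1
    rw [sub_eq_iff_eq_add] at h1
    rw [h1]
    abel
  have hBu : IsUnit BR.det := isUnit_iff_ne_zero.mpr hdet
  have hBB : BR * BR⁻¹ = 1 := Matrix.mul_nonsing_inv _ hBu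
  have hB'B : BR⁻¹ * BR = 1 := Matrix.nonsing_inv_mul _ hBu
  have hint : ∀ m : Fin n → ℤ, ∃ m' : Fin n → ℤ,
      BR⁻¹ *ᵥ Stmt5Aux.cV m = Stmt5Aux.cV m' := by
    intro m
    have hy : F (BR⁻¹ *ᵥ Stmt5Aux.cV m)
        = intMatAct ((1 : Matrix.SpecialLinearGroup (Fin n) ℤ) : Matrix (Fin n) (Fin n) ℤ) (F 0)
          + fun i => ((m i : ℝ)) := by
      rw [hFx (BR⁻¹ *ᵥ Stmt5Aux.cV m), Matrix.mulVec_mulVec, hBB, Matrix.one_mulVec]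
      have h2 : intMatAct ((1 : Matrix.SpecialLinearGroup (Fin n) ℤ) : Matrix (Fin n) (Fin n) ℤ) (F 0) = F 0 := by
        unfold intMatAct
        rw [Matrix.SpecialLinearGroup.coe_one, Stmt5Aux.mapc_one, Matrix.one_mulVec]
      rw [h2]
      funext i
      simp only [Pi.add_apply, Stmt5Aux.cV]
      ring
    obtain ⟨γ, hγ, m', hm'⟩ := (horb 0 (BR⁻¹ *ᵥ Stmt5Aux.cV m)).mpr ⟨1, one_mem _, m, hy⟩
    refine ⟨m', ?_⟩
    rw [hm']
    unfold intMatAct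
    rw [Matrix.mulVec_zero, zero_add]
    rfl
  choose mfun hmfun using hint
  set B' : Matrix (Fin n) (Fin n) ℤ := Matrix.of (fun a b => mfun (Pi.single b 1) a) with hB'def
  have hB'R : B'.map (Int.cast : ℤ → ℝ) = BR⁻¹ := by
    ext a b
    have h3 := congrFun (hmfun (Pi.single b 1)) a
    rw [Stmt5Aux.cV_single] at h3
    simp only [Matrix.mulVec_single, mul_one] at h3
    rw [Matrix.map_apply, hB'def]
    exact (h3.symm.trans (by simp))
  have hBB' : B * B' = 1 := by
    apply Stmt5Aux.mapc_inj
    rw [Stmt5Aux.mapc_mul, hB'R, Stmt5Aux.mapc_one, ← hBR, hBB]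
  have hB'Bz : B' * B = 1 := by
    apply Stmt5Aux.mapc_inj
    rw [Stmt5Aux.mapc_mul, hB'R, Stmt5Aux.mapc_one, ← hBR, hB'B]
  have hBsym : ∀ y m, F.symm (y + Stmt5Aux.cV m) = F.symm y + Stmt5Aux.cV (B' *ᵥ m) := by
    intro y m
    apply F.injective
    rw [Equiv.apply_symm_apply, hB, Equiv.apply_symm_apply, Matrix.mulVec_mulVec, hBB',
      Matrix.one_mulVec]
  have horbsymm : ∀ x y : Fin n → ℝ,
      (∃ γ ∈ Γ, ∃ m : Fin n → ℤ,
          y = intMatAct (γ : Matrix (Fin n) (Fin n) ℤ) x + fun i => (m i : ℝ)) ↔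
      (∃ γ ∈ Γ, ∃ m : Fin n → ℤ,
          F.symm y = intMatAct (γ : Matrix (Fin n) (Fin n) ℤ) (F.symm x) + fun i => (m i : ℝ)) := by
    intro x y
    have h4 := horb (F.symm x) (F.symm y)
    rw [Equiv.apply_symm_apply, Equiv.apply_symm_apply] at h4
    exact h4.symm
  have hFss : ContDiff ℝ 1 ⇑F.symm.symm := by rw [Equiv.symm_symm]; exact hF
  have hconjS : ∀ γ : Matrix.SpecialLinearGroup (Fin n) ℤ, γ ∈ Γ →
      ∃ δ : Matrix.SpecialLinearGroup (Fin n) ℤ, δ ∈ Γ ∧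
        B' * (γ : Matrix (Fin n) (Fin n) ℤ) = (δ : Matrix (Fin n) (Fin n) ℤ) * B' := by
    intro γ hγ
    obtain ⟨δ, hδ, c, hrel⟩ := Stmt5Aux.engine Γ F.symm hFsymm hFss horbsymm γ hγ
    exact ⟨δ, hδ, Stmt5Aux.step4 F.symm B' hBsym _ _ c hrel⟩
  refine ⟨⟨B, B', hBB', hB'Bz⟩, ?_, F 0, ?_⟩
  · intro g
    constructor
    · rintro ⟨γ, hγ, rfl⟩
      obtain ⟨β, hβ, c, hcomm, -⟩ := hconjF γ hγ
      refine ⟨β, hβ, ?_⟩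
      show (β : Matrix (Fin n) (Fin n) ℤ) = B * (γ : Matrix (Fin n) (Fin n) ℤ) * B'
      calc (β : Matrix (Fin n) (Fin n) ℤ) = (β : Matrix (Fin n) (Fin n) ℤ) * (B * B') := by
            rw [hBB', mul_one]
      _ = ((β : Matrix (Fin n) (Fin n) ℤ) * B) * B' := by rw [mul_assoc]
      _ = (B * (γ : Matrix (Fin n) (Fin n) ℤ)) * B' := by rw [hcomm]
    · rintro ⟨γ, hγ, rfl⟩
      obtain ⟨δ, hδ, hcomm⟩ := hconjS γ hγ
      refine ⟨δ, hδ, ?_⟩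
      show B * (δ : Matrix (Fin n) (Fin n) ℤ) * B' = (γ : Matrix (Fin n) (Fin n) ℤ)
      have h5 : (δ : Matrix (Fin n) (Fin n) ℤ) = B' * (γ : Matrix (Fin n) (Fin n) ℤ) * B := by
        calc (δ : Matrix (Fin n) (Fin n) ℤ)
            = ((δ : Matrix (Fin n) (Fin n) ℤ) * B') * B := by rw [mul_assoc, hB'Bz, mul_one]
        _ = (B' * (γ : Matrix (Fin n) (Fin n) ℤ)) * B := by rw [hcomm]
      rw [h5]
      calc B * (B' * (γ : Matrix (Fin n) (Fin n) ℤ) * B) * B'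
          = (B * B') * (γ : Matrix (Fin n) (Fin n) ℤ) * (B * B') := by
            noncomm_ring
      _ = (γ : Matrix (Fin n) (Fin n) ℤ) := by rw [hBB', one_mul, mul_one]
  · intro x
    show F x = intMatAct B x + F 0
    exact hFx x
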